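/- Let (Ω, F, P) be a probability space on a standard Borel space and let I, X, Y, D be measurable maps from Ω into standard Borel spaces. Suppose π = h ∘ D for some measurable function h (so that π is σ(D)-measurable). Then I is conditionally independent of the triple (X, Y, D) given σ(π) if and only if both of the following hold: (i) I is conditionally independent of D given σ(π), and (ii) I is conditionally independent of (X, Y) given σ(D). (Lemma 3: under Assumption 1, Assumption 2 is equivalent to I_S ⫫ D_P | π_S together with I_S ⫫ (X_P, Y_P) | D_P.) -/

import Mathlib

open MeasureTheory ProbabilityTheory

section Aux

variable {Ω : Type*}

lemma isPiSystem_interSets (m₁ m₂ : MeasurableSpace Ω) :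
    IsPiSystem {s : Set Ω | ∃ s₁ s₂, MeasurableSet[m₁] s₁ ∧ MeasurableSet[m₂] s₂ ∧ s = s₁ ∩ s₂} := by
  rintro s ⟨s₁, s₂, hs₁, hs₂, rfl⟩ t ⟨t₁, t₂, ht₁, ht₂, rfl⟩ -
  refine ⟨s₁ ∩ t₁, s₂ ∩ t₂, hs₁.inter ht₁, hs₂.inter ht₂, ?_⟩
  ext x
  simp only [Set.mem_inter_iff]
  tauto

lemma sup_eq_generateFrom_interSets (m₁ m₂ : MeasurableSpace Ω) :
    m₁ ⊔ m₂ = MeasurableSpace.generateFrom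
      {s : Set Ω | ∃ s₁ s₂, MeasurableSet[m₁] s₁ ∧ MeasurableSet[m₂] s₂ ∧ s = s₁ ∩ s₂} := by
  refine le_antisymm (sup_le ?_ ?_) (MeasurableSpace.generateFrom_le ?_)
  · intro s hs
    exact MeasurableSpace.measurableSet_generateFrom
      ⟨s, Set.univ, hs, MeasurableSet.univ, (Set.inter_univ s).symm⟩
  · intro s hs
    exact MeasurableSpace.measurableSet_generateFrom
      ⟨Set.univ, s, MeasurableSet.univ, hs, (Set.univ_inter s).symm⟩
  · rintro s ⟨s₁, s₂, hs₁, hs₂, rfl⟩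
    exact ((le_sup_left : m₁ ≤ m₁ ⊔ m₂) _ hs₁).inter ((le_sup_right : m₂ ≤ m₁ ⊔ m₂) _ hs₂)

lemma comap_prodMk {α β γ : Type*} [mβ : MeasurableSpace β] [mγ : MeasurableSpace γ]
    (f : α → β) (g : α → γ) :
    MeasurableSpace.comap (fun a => (f a, g a)) inferInstance
      = MeasurableSpace.comap f mβ ⊔ MeasurableSpace.comap g mγ := by
  rw [show (inferInstance : MeasurableSpace (β × γ))
      = mβ.comap Prod.fst ⊔ mγ.comap Prod.snd from rfl,
    MeasurableSpace.comap_sup, MeasurableSpace.comap_comp, MeasurableSpace.comap_comp]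
  rfl

end Aux

/-- Conditional independence of `m₁` and `m₂` given `m'` is equivalent to the statement that
conditioning on `m' ⊔ m₂` or on `m'` gives the same conditional expectation for indicators of
`m₁`-measurable sets. -/
lemma condIndep_iff_condexp_sup_ae_eq
    {Ω : Type*} {m' m₁ m₂ : MeasurableSpace Ω}
    {mΩ : MeasurableSpace Ω} [StandardBorelSpace Ω]
    (hm' : m' ≤ mΩ) (h₁ : m₁ ≤ mΩ) (h₂ : m₂ ≤ mΩ)
    (μ : Measure Ω) [IsProbabilityMeasure μ] :
    CondIndep m' m₁ m₂ hm' μ ↔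
      ∀ t, MeasurableSet[m₁] t → (μ⟦t | m' ⊔ m₂⟧) =ᵐ[μ] (μ⟦t | m'⟧) := by
  have hsup : m' ⊔ m₂ ≤ mΩ := sup_le hm' h₂
  rw [condIndep_iff m' m₁ m₂ hm' h₁ h₂ μ]
  constructor
  · intro H t ht
    have ht' : MeasurableSet (t : Set Ω) := h₁ t ht
    have hf_int : Integrable (Set.indicator t fun _ => (1 : ℝ)) μ :=
      (integrable_const (1 : ℝ)).indicator ht'
    refine (ae_eq_condExp_of_forall_setIntegral_eq hsup hf_int
      (fun s _ _ => integrable_condExp.integrableOn)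
      (fun s hs _ => ?_)
      (((stronglyMeasurable_condExp (m := m') (μ := μ)).mono (le_sup_left : m' ≤ m' ⊔ m₂)).aestronglyMeasurable (μ := μ))).symm
    have hg_int : Integrable (μ⟦t | m'⟧) μ := integrable_condExp
    have key : ∀ u, MeasurableSet[m' ⊔ m₂] u → ∫ x in u, (μ⟦t | m'⟧) x ∂μ
        = ∫ x in u, (Set.indicator t fun _ => (1 : ℝ)) x ∂μ := by
      refine fun u hu => MeasurableSpace.induction_on_inter (m := m' ⊔ m₂)
        (C := fun u _ => ∫ x in u, (μ⟦t | m'⟧) x ∂μ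
          = ∫ x in u, (Set.indicator t fun _ => (1 : ℝ)) x ∂μ)
        (sup_eq_generateFrom_interSets m' m₂) (isPiSystem_interSets m' m₂)
        (by simp) ?_ ?_ ?_ u hu
      · rintro u ⟨s₁, s₂, hs₁, hs₂, rfl⟩
        have hs₁' : MeasurableSet s₁ := hm' _ hs₁
        have hs₂' : MeasurableSet s₂ := h₂ _ hs₂
        have hf₂_int : Integrable (Set.indicator s₂ fun _ => (1 : ℝ)) μ :=
          (integrable_const (1 : ℝ)).indicator hs₂'
        have h_mul_eq : (μ⟦t | m'⟧) * (Set.indicator s₂ fun _ => (1 : ℝ))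
            = Set.indicator s₂ (μ⟦t | m'⟧) := by
          funext x
          by_cases hx : x ∈ s₂ <;> simp [Set.indicator_apply, hx]
        have h_mul_int : Integrable ((μ⟦t | m'⟧) * (Set.indicator s₂ fun _ => (1 : ℝ))) μ := by
          rw [h_mul_eq]; exact hg_int.indicator hs₂'
        have h_ts₂_int : Integrable (Set.indicator (t ∩ s₂) fun _ => (1 : ℝ)) μ :=
          (integrable_const (1 : ℝ)).indicator (ht'.inter hs₂')
        calc ∫ x in s₁ ∩ s₂, (μ⟦t | m'⟧) x ∂μ
            = ∫ x in s₁, Set.indicator s₂ (μ⟦t | m'⟧) x ∂μ := (setIntegral_indicator hs₂').symm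
          _ = ∫ x in s₁, ((μ⟦t | m'⟧) * (Set.indicator s₂ fun _ => (1 : ℝ))) x ∂μ := by
              rw [h_mul_eq]
          _ = ∫ x in s₁, (μ[(μ⟦t | m'⟧) * (Set.indicator s₂ fun _ => (1 : ℝ)) | m']) x ∂μ :=
              (setIntegral_condExp hm' h_mul_int hs₁).symm
          _ = ∫ x in s₁, ((μ⟦t | m'⟧) * (μ⟦s₂ | m'⟧)) x ∂μ := by
              refine integral_congr_ae (ae_restrict_of_ae ?_)
              exact condExp_mul_of_stronglyMeasurable_left stronglyMeasurable_condExp h_mul_int hf₂_int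
          _ = ∫ x in s₁, (μ⟦t ∩ s₂ | m'⟧) x ∂μ := by
              refine integral_congr_ae (ae_restrict_of_ae ?_)
              exact (H t s₂ ht hs₂).symm
          _ = ∫ x in s₁, (Set.indicator (t ∩ s₂) fun _ => (1 : ℝ)) x ∂μ :=
              setIntegral_condExp hm' h_ts₂_int hs₁
          _ = ∫ _ in s₁ ∩ (t ∩ s₂), (1 : ℝ) ∂μ := setIntegral_indicator (ht'.inter hs₂')
          _ = ∫ _ in (s₁ ∩ s₂) ∩ t, (1 : ℝ) ∂μ := by
              rw [show s₁ ∩ (t ∩ s₂) = (s₁ ∩ s₂) ∩ t by ext x; simp only [Set.mem_inter_iff]; tauto]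
          _ = ∫ x in s₁ ∩ s₂, (Set.indicator t fun _ => (1 : ℝ)) x ∂μ :=
              (setIntegral_indicator ht').symm
      · intro u hu hC
        have hu' : MeasurableSet u := hsup _ hu
        have e₁ := integral_add_compl hu' hg_int
        have e₂ := integral_add_compl hu' hf_int
        have e₃ : ∫ x, (μ⟦t | m'⟧) x ∂μ = ∫ x, (Set.indicator t fun _ => (1 : ℝ)) x ∂μ :=
          integral_condExp hm'
        linarith
      · intro f hdisj hmeas hC
        rw [integral_iUnion (fun i => hsup _ (hmeas i)) hdisj hg_int.integrableOn,
          integral_iUnion (fun i => hsup _ (hmeas i)) hdisj hf_int.integrableOn]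
        exact tsum_congr hC
    exact key s hs
  · intro H t₁ t₂ ht₁ ht₂
    have ht₁' : MeasurableSet t₁ := h₁ t₁ ht₁
    have ht₂' : MeasurableSet t₂ := h₂ t₂ ht₂
    have hf₁_int : Integrable (Set.indicator t₁ fun _ => (1 : ℝ)) μ :=
      (integrable_const (1 : ℝ)).indicator ht₁'
    have hf₂_int : Integrable (Set.indicator t₂ fun _ => (1 : ℝ)) μ :=
      (integrable_const (1 : ℝ)).indicator ht₂'
    have h_ind_eq : Set.indicator (t₁ ∩ t₂) (fun _ => (1 : ℝ))
        = (Set.indicator t₂ fun _ => (1 : ℝ)) * (Set.indicator t₁ fun _ => (1 : ℝ)) := by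
      funext x
      by_cases hx₁ : x ∈ t₁ <;> by_cases hx₂ : x ∈ t₂ <;>
        simp [Set.indicator_apply, hx₁, hx₂]
    have h_prod_int : Integrable
        ((Set.indicator t₂ fun _ => (1 : ℝ)) * (Set.indicator t₁ fun _ => (1 : ℝ))) μ := by
      rw [← h_ind_eq]; exact (integrable_const (1 : ℝ)).indicator (ht₁'.inter ht₂')
    have hsm₂ : StronglyMeasurable[m' ⊔ m₂] (Set.indicator t₂ fun _ => (1 : ℝ)) :=
      stronglyMeasurable_const.indicator ((le_sup_right : m₂ ≤ m' ⊔ m₂) _ ht₂)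
    have step1 : μ⟦t₁ ∩ t₂ | m'⟧
        =ᵐ[μ] μ[μ[(Set.indicator t₂ fun _ => (1 : ℝ))
          * (Set.indicator t₁ fun _ => (1 : ℝ)) | m' ⊔ m₂] | m'] := by
      rw [h_ind_eq]
      exact (condExp_condExp_of_le le_sup_left hsup).symm
    have step2 : μ[(Set.indicator t₂ fun _ => (1 : ℝ))
          * (Set.indicator t₁ fun _ => (1 : ℝ)) | m' ⊔ m₂]
        =ᵐ[μ] (Set.indicator t₂ fun _ => (1 : ℝ)) * (μ⟦t₁ | m' ⊔ m₂⟧) :=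
      condExp_mul_of_stronglyMeasurable_left hsm₂ h_prod_int hf₁_int
    have step3 : (Set.indicator t₂ fun _ => (1 : ℝ)) * (μ⟦t₁ | m' ⊔ m₂⟧)
        =ᵐ[μ] (μ⟦t₁ | m'⟧) * (Set.indicator t₂ fun _ => (1 : ℝ)) := by
      filter_upwards [H t₁ ht₁] with x hx
      simp only [Pi.mul_apply, hx, mul_comm]
    have h_final_int : Integrable ((μ⟦t₁ | m'⟧) * (Set.indicator t₂ fun _ => (1 : ℝ))) μ := by
      have : (μ⟦t₁ | m'⟧) * (Set.indicator t₂ fun _ => (1 : ℝ))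
          = Set.indicator t₂ (μ⟦t₁ | m'⟧) := by
        funext x
        by_cases hx : x ∈ t₂ <;> simp [Set.indicator_apply, hx]
      rw [this]
      exact integrable_condExp.indicator ht₂'
    calc μ⟦t₁ ∩ t₂ | m'⟧
        =ᵐ[μ] μ[μ[(Set.indicator t₂ fun _ => (1 : ℝ))
          * (Set.indicator t₁ fun _ => (1 : ℝ)) | m' ⊔ m₂] | m'] := step1
      _ =ᵐ[μ] μ[(μ⟦t₁ | m'⟧) * (Set.indicator t₂ fun _ => (1 : ℝ)) | m'] :=
          condExp_congr_ae (step2.trans step3)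
      _ =ᵐ[μ] (μ⟦t₁ | m'⟧) * (μ⟦t₂ | m'⟧) :=
          condExp_mul_of_stronglyMeasurable_left stronglyMeasurable_condExp h_final_int hf₂_int

/-- Lemma 3: if `π = h ∘ D` is `σ(D)`-measurable, then `I ⫫ (X, Y, D) ∣ σ(π)` holds if and only
if both `I ⫫ D ∣ σ(π)` and `I ⫫ (X, Y) ∣ σ(D)` hold. -/
theorem condIndepFun_triple_iff
    {Ω : Type*} {mΩ : MeasurableSpace Ω} [StandardBorelSpace Ω]
    (P : Measure Ω) [IsProbabilityMeasure P]
    {EI EX EY ED : Type*} [MeasurableSpace EI] [StandardBorelSpace EI]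
    [MeasurableSpace EX] [StandardBorelSpace EX]
    [MeasurableSpace EY] [StandardBorelSpace EY]
    [MeasurableSpace ED] [StandardBorelSpace ED]
    (I : Ω → EI) (hI : Measurable I)
    (X : Ω → EX) (hX : Measurable X)
    (Y : Ω → EY) (hY : Measurable Y)
    (D : Ω → ED) (hD : Measurable D)
    (h : ED → ℝ) (hh : Measurable h) :
    CondIndepFun (MeasurableSpace.comap (h ∘ D) Real.measurableSpace)
        (((hh.comp hD).comap_le).trans le_rfl) I (fun ω => (X ω, Y ω, D ω)) P ↔
      (CondIndepFun (MeasurableSpace.comap (h ∘ D) Real.measurableSpace)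
          (((hh.comp hD).comap_le).trans le_rfl) I D P ∧
        CondIndepFun (MeasurableSpace.comap D inferInstance)
          (hD.comap_le) I (fun ω => (X ω, Y ω)) P) := by
  set mPi : MeasurableSpace Ω := MeasurableSpace.comap (h ∘ D) Real.measurableSpace with hmPi
  set mD : MeasurableSpace Ω := MeasurableSpace.comap D inferInstance with hmD
  set mI : MeasurableSpace Ω := MeasurableSpace.comap I inferInstance with hmI
  set mXY : MeasurableSpace Ω := MeasurableSpace.comap (fun ω => (X ω, Y ω)) inferInstance
    with hmXY
  set mXYD : MeasurableSpace Ω := MeasurableSpace.comap (fun ω => (X ω, Y ω, D ω)) inferInstance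
    with hmXYD
  have hPi_le : mPi ≤ mΩ := ((hh.comp hD).comap_le).trans le_rfl
  have hD_le : mD ≤ mΩ := hD.comap_le
  have hI_le : mI ≤ mΩ := hI.comap_le
  have hXY_le : mXY ≤ mΩ := (hX.prodMk hY).comap_le
  have hXYD_le : mXYD ≤ mΩ := (hX.prodMk (hY.prodMk hD)).comap_le
  have hPiD : mPi ≤ mD := by
    rw [hmPi, hmD, ← MeasurableSpace.comap_comp]
    exact MeasurableSpace.comap_mono hh.comap_le
  have hXYD_eq : mXYD = mXY ⊔ mD := by
    rw [hmXYD, hmXY, hmD, comap_prodMk X (fun ω => (Y ω, D ω)), comap_prodMk Y D,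
      comap_prodMk X Y, sup_assoc]
  have hD_le_XYD : mD ≤ mXYD := hXYD_eq ▸ le_sup_right
  have hPi_le_XYD : mPi ≤ mXYD := hPiD.trans hD_le_XYD
  -- rewrite the three conditional independence statements via the key lemma
  have keyA : CondIndepFun mPi hPi_le I (fun ω => (X ω, Y ω, D ω)) P ↔
      ∀ t, MeasurableSet[mI] t → (P⟦t | mXYD⟧) =ᵐ[P] (P⟦t | mPi⟧) := by
    rw [condIndepFun_iff_condIndep,
      condIndep_iff_condexp_sup_ae_eq hPi_le hI_le hXYD_le P,
      sup_of_le_right hPi_le_XYD]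
  have keyB : CondIndepFun mPi hPi_le I D P ↔
      ∀ t, MeasurableSet[mI] t → (P⟦t | mD⟧) =ᵐ[P] (P⟦t | mPi⟧) := by
    rw [condIndepFun_iff_condIndep,
      condIndep_iff_condexp_sup_ae_eq hPi_le hI_le hD_le P,
      sup_of_le_right hPiD]
  have keyC : CondIndepFun mD hD_le I (fun ω => (X ω, Y ω)) P ↔
      ∀ t, MeasurableSet[mI] t → (P⟦t | mXYD⟧) =ᵐ[P] (P⟦t | mD⟧) := by
    rw [condIndepFun_iff_condIndep,
      condIndep_iff_condexp_sup_ae_eq hD_le hI_le hXY_le P,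
      sup_comm, ← hXYD_eq]
  rw [keyA, keyB, keyC]
  constructor
  · intro HA
    have HB : ∀ t, MeasurableSet[mI] t → (P⟦t | mD⟧) =ᵐ[P] (P⟦t | mPi⟧) := by
      intro t ht
      calc P⟦t | mD⟧
          =ᵐ[P] P[(P⟦t | mXYD⟧) | mD] := (condExp_condExp_of_le hD_le_XYD hXYD_le).symm
        _ =ᵐ[P] P[(P⟦t | mPi⟧) | mD] := condExp_congr_ae (HA t ht)
        _ = P⟦t | mPi⟧ := condExp_of_stronglyMeasurable hD_le
            (stronglyMeasurable_condExp.mono hPiD) integrable_condExp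
    exact ⟨HB, fun t ht => (HA t ht).trans (HB t ht).symm⟩
  · rintro ⟨HB, HC⟩ t ht
    exact (HC t ht).trans (HB t ht)
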